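/- Let m ≥ 4 be even. Then u_{Σ_{ar}}(α) = 1 for all α ∈ ℤ^{2^m}, all a = 1,…,m, and all r = 1,2. Equivalently, all entries of H − Σ_{ar} H Σ_{ar}ᵀ below the diagonal are even. -/

import Mathlib

open Matrix

/-- `bwBit i a` is the `a`-th binary digit of `i`. -/
def bwBit (i a : ℕ) : ℕ := i / 2 ^ a % 2

/-- `bwPar m i` is the number of zero digits in the length-`m` binary expansion of `i`, mod 2. -/
def bwPar (m i : ℕ) : ℕ := ((Finset.range m).filter fun a => bwBit i a = 0).card % 2

/-- The exponent of `√2` in the `(i,j)` entry of the Gram matrix of `BW(m)`. -/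
def bwExp (m i j : ℕ) : ℤ :=
  (bwPar m i : ℤ) + (bwPar m j : ℤ) - 2 * (((m + 1) / 2 : ℕ) : ℤ) +
    ∑ l ∈ Finset.range m,
      (2 * (bwBit i l : ℤ) * (bwBit j l : ℤ) - (bwBit i l : ℤ) - (bwBit j l : ℤ) + 2)

/-- The Gram matrix of the Barnes-Wall lattice `BW(m)`:
`G i j = (w_i, w_j) = √2 ^ (p i + p j - 2⌈m/2⌉ + ∑ (2 i[l] j[l] - i[l] - j[l] + 2))`. -/
noncomputable def bwGram (m : ℕ) : Matrix (Fin (2 ^ m)) (Fin (2 ^ m)) ℝ :=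
  Matrix.of fun i j => Real.sqrt 2 ^ bwExp m (i : ℕ) (j : ℕ)

/-- The matrix of the lattice automorphism `Σ_{ar}` of `BW(m)` in the basis `w_i`
(acting on row vectors from the right); `r = 1` gives `Σ_{a1}`, any other `r` gives `Σ_{a2}`. -/
def bwSigma (m a r : ℕ) : Matrix (Fin (2 ^ m)) (Fin (2 ^ m)) ℤ :=
  Matrix.of fun i j =>
    if r = 1 then
      if bwBit (i : ℕ) (m - a) = 0 then
        (if j = i then -1 else 0) +
          (if (j : ℕ) = (i : ℕ) + 2 ^ (m - a) then 2 ^ bwPar m (i : ℕ) else 0)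
      else if j = i then 1 else 0
    else
      if bwBit (i : ℕ) (m - a) = 1 then
        (if j = i then -1 else 0) +
          (if (j : ℕ) + 2 ^ (m - a) = (i : ℕ) then 2 ^ bwPar m (i : ℕ) else 0)
      else if j = i then 1 else 0

/-- `A_{ar} = Σ_{ar} - I`. -/
def bwA (m a r : ℕ) : Matrix (Fin (2 ^ m)) (Fin (2 ^ m)) ℤ := bwSigma m a r - 1

/-- The half-Gram matrix `H` of `BW(m)`: `H i j = G i j` for `i > j`, `G i i / 2` on the
diagonal, and `0` above the diagonal. -/
noncomputable def bwH (m : ℕ) : Matrix (Fin (2 ^ m)) (Fin (2 ^ m)) ℝ :=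
  Matrix.of fun i j =>
    if j < i then Real.sqrt 2 ^ bwExp m (i : ℕ) (j : ℕ)
    else if i = j then Real.sqrt 2 ^ (bwExp m (i : ℕ) (i : ℕ) - 2)
    else 0

/-- The matrix `H - Σ H Σᵀ` underlying the bilinear form `B_Σ`. -/
noncomputable def bwBMat (m : ℕ) (S : Matrix (Fin (2 ^ m)) (Fin (2 ^ m)) ℤ) :
    Matrix (Fin (2 ^ m)) (Fin (2 ^ m)) ℝ :=
  bwH m - S.map (Int.cast : ℤ → ℝ) * bwH m * (S.map (Int.cast : ℤ → ℝ))ᵀ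

/-- The bilinear form `B_Σ(α, β) = ∑_{i > j} α_i β_j (H - Σ H Σᵀ)_{ij}`. -/
noncomputable def bwBQuad (m : ℕ) (S : Matrix (Fin (2 ^ m)) (Fin (2 ^ m)) ℤ)
    (α β : Fin (2 ^ m) → ℤ) : ℝ :=
  ∑ i, ∑ j, if j < i then (α i : ℝ) * (β j : ℝ) * bwBMat m S i j else 0

/-- `u_Σ(α) = (-1)^{B_Σ(α,α)}`, rendered as `cos (π B_Σ(α,α))`, which agrees with
`(-1)^k` whenever `B_Σ(α,α)` is the integer `k`. -/
noncomputable def bwU (m : ℕ) (S : Matrix (Fin (2 ^ m)) (Fin (2 ^ m)) ℤ)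
    (α : Fin (2 ^ m) → ℤ) : ℝ :=
  Real.cos (Real.pi * bwBQuad m S α α)


lemma bwBit_le_one (i a : ℕ) : bwBit i a ≤ 1 := by
  unfold bwBit; omega

lemma bwBit_decomp (q c r b l : ℕ) (hc : c ≤ 1) (hr : r < 2^b) :
    bwBit (q * 2^(b+1) + c * 2^b + r) l =
      if l < b then bwBit r l else if l = b then c else bwBit q (l - (b+1)) := by
  unfold bwBit
  rcases lt_trichotomy l b with h | h | h
  · rw [if_pos h]
    have e1 : (2:ℕ)^(b+1) = 2^(b+1-l) * 2^l := by rw [← pow_add]; congr 1; omega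
    have e2 : (2:ℕ)^b = 2^(b-l) * 2^l := by rw [← pow_add]; congr 1; omega
    have hN : q * 2^(b+1) + c * 2^b + r = r + (q * 2^(b+1-l) + c * 2^(b-l)) * 2^l := by
      rw [e1, e2]; ring
    rw [hN, Nat.add_mul_div_right _ _ (Nat.two_pow_pos l)]
    have e3 : q * 2^(b+1-l) + c * 2^(b-l) = 2 * (q * 2^(b-l) + c * 2^(b-1-l)) := by
      have f1 : (2:ℕ)^(b+1-l) = 2 * 2^(b-l) := by rw [← pow_succ']; congr 1; omega
      have f2 : (2:ℕ)^(b-l) = 2 * 2^(b-1-l) := by rw [← pow_succ']; congr 1; omega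
      calc q * 2^(b+1-l) + c * 2^(b-l) = q * (2*2^(b-l)) + c * (2*2^(b-1-l)) := by rw [← f1, ← f2]
        _ = 2 * (q * 2^(b-l) + c * 2^(b-1-l)) := by ring
    rw [e3]; omega
  · subst h
    have hN : q * 2^(l+1) + c * 2^l + r = r + (2*q + c) * 2^l := by
      rw [pow_succ]; ring
    rw [hN, Nat.add_mul_div_right _ _ (Nat.two_pow_pos l),
      Nat.div_eq_of_lt hr]
    simp; omega
  · rw [if_neg (by omega), if_neg (by omega)]
    have e1 : (2:ℕ)^l = 2^(b+1) * 2^(l-(b+1)) := by rw [← pow_add]; congr 1; omega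
    have hN : q * 2^(b+1) + c * 2^b + r = (c * 2^b + r) + q * 2^(b+1) := by ring
    have hs : c * 2^b + r < 2^(b+1) := by
      have : c * 2^b ≤ 2^b := by
        calc c * 2^b ≤ 1 * 2^b := Nat.mul_le_mul_right _ hc
          _ = 2^b := one_mul _
      rw [pow_succ]; omega
    rw [hN, e1, ← Nat.div_div_eq_div_mul,
      Nat.add_mul_div_right _ _ (Nat.two_pow_pos (b+1)),
      Nat.div_eq_of_lt hs]
    simp

lemma bwBit_split (i b : ℕ) :
    i = (i / 2^(b+1)) * 2^(b+1) + (bwBit i b) * 2^b + (i % 2^b) ∧ i % 2^b < 2^b := by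
  have h1 := Nat.div_add_mod i (2^(b+1))
  have h2 := Nat.div_add_mod (i / 2^b) 2
  have h3 := Nat.div_add_mod i (2^b)
  have h4 : i / 2^b / 2 = i / 2^(b+1) := by
    rw [Nat.div_div_eq_div_mul, ← pow_succ]
  have h5 : (2:ℕ)^(b+1) = 2 * 2^b := by rw [pow_succ]; ring
  have hb : bwBit i b = i / 2^b % 2 := rfl
  have h6 : i / 2^b = 2 * (i / 2^(b+1)) + bwBit i b := by omega
  constructor
  · have h7 : i / 2^(b+1) * 2^(b+1) + bwBit i b * 2^b + i % 2^b
        = 2^b * (2 * (i / 2^(b+1)) + bwBit i b) + i % 2^b := by rw [h5]; ring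
    rw [h7, ← h6, h3]
  · exact Nat.mod_lt _ (Nat.two_pow_pos b)

lemma bwBit_flip {i b : ℕ} (h0 : bwBit i b = 0) (l : ℕ) :
    bwBit (i + 2^b) l = if l = b then 1 else bwBit i l := by
  obtain ⟨hi, hr⟩ := bwBit_split i b
  set q := i / 2^(b+1)
  set r := i % 2^b
  have h1 : i + 2^b = q * 2^(b+1) + 1 * 2^b + r := by rw [h0] at hi; omega
  have h2 : i = q * 2^(b+1) + 0 * 2^b + r := by rw [h0] at hi; omega
  rw [h1, bwBit_decomp q 1 r b l (by norm_num) hr]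
  conv_rhs => rw [h2, bwBit_decomp q 0 r b l (by norm_num) hr]
  rcases lt_trichotomy l b with h | h | h
  · simp [h, show l ≠ b by omega]
  · simp [h]
  · simp [show ¬ l < b by omega, show l ≠ b by omega]

lemma bwBit_one_sub {i b : ℕ} (h1 : bwBit i b = 1) :
    2^b ≤ i ∧ bwBit (i - 2^b) b = 0 ∧ i = (i - 2^b) + 2^b := by
  obtain ⟨hi, hr⟩ := bwBit_split i b
  set q := i / 2^(b+1)
  set r := i % 2^b
  have hle : 2^b ≤ i := by rw [h1] at hi; omega
  have h2 : i - 2^b = q * 2^(b+1) + 0 * 2^b + r := by rw [h1] at hi; omega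
  refine ⟨hle, ?_, by omega⟩
  rw [h2, bwBit_decomp q 0 r b b (by norm_num) hr]
  simp
def bwD (m i j : ℕ) : ℕ := ((Finset.range m).filter fun l => bwBit i l ≠ bwBit j l).card

lemma bwPar_le_one (m i : ℕ) : bwPar m i ≤ 1 := by unfold bwPar; omega

lemma bwPar_flip {m i b : ℕ} (hb : b < m) (h0 : bwBit i b = 0) :
    bwPar m (i + 2^b) = 1 - bwPar m i ∧ 1 ≤ ((Finset.range m).filter fun l => bwBit i l = 0).card := by
  have hmem : b ∈ (Finset.range m).filter fun l => bwBit i l = 0 := by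
    simp [Finset.mem_filter, Finset.mem_range, hb, h0]
  have hfil : ((Finset.range m).filter fun l => bwBit (i + 2^b) l = 0)
      = ((Finset.range m).filter fun l => bwBit i l = 0).erase b := by
    ext l
    simp only [Finset.mem_filter, Finset.mem_erase, Finset.mem_range, bwBit_flip h0]
    by_cases h : l = b <;> simp [h] <;> tauto
  have hcard : 1 ≤ ((Finset.range m).filter fun l => bwBit i l = 0).card :=
    Finset.card_pos.mpr ⟨b, hmem⟩
  constructor
  · unfold bwPar
    rw [hfil, Finset.card_erase_of_mem hmem]
    omega
  · exact hcard

lemma bwD_comm (m i j : ℕ) : bwD m i j = bwD m j i := by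
  unfold bwD; congr 1; ext l; simp [ne_comm]

lemma bwD_le (m i j : ℕ) : bwD m i j ≤ m := by
  unfold bwD
  exact le_trans (Finset.card_filter_le _ _) (by simp)

lemma bwD_lt_of_agree {m i j b : ℕ} (hb : b < m) (h : bwBit i b = bwBit j b) :
    bwD m i j < m := by
  unfold bwD
  have hsub : ((Finset.range m).filter fun l => bwBit i l ≠ bwBit j l)
      ⊆ (Finset.range m).erase b := by
    intro l hl
    simp only [Finset.mem_filter, Finset.mem_range] at hl
    simp only [Finset.mem_erase, Finset.mem_range]
    refine ⟨?_, hl.1⟩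
    rintro rfl; exact hl.2 h
  calc _ ≤ ((Finset.range m).erase b).card := Finset.card_le_card hsub
    _ = m - 1 := by rw [Finset.card_erase_of_mem (by simp [hb]), Finset.card_range]
    _ < m := by omega

lemma bwD_flip0 {m i j b : ℕ} (hb : b < m) (h0 : bwBit i b = 0) (hj : bwBit j b = 0) :
    bwD m (i + 2^b) j = bwD m i j + 1 := by
  unfold bwD
  have hfil : ((Finset.range m).filter fun l => bwBit (i + 2^b) l ≠ bwBit j l)
      = insert b ((Finset.range m).filter fun l => bwBit i l ≠ bwBit j l) := by
    ext l
    simp only [Finset.mem_filter, Finset.mem_range, Finset.mem_insert, bwBit_flip h0]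
    by_cases h : l = b
    · subst h; simp [hb, hj]
    · simp only [if_neg h]; tauto
  rw [hfil, Finset.card_insert_of_notMem (by simp [h0, hj])]

lemma bwD_flip1 {m i j b : ℕ} (hb : b < m) (h0 : bwBit i b = 0) (hj : bwBit j b = 1) :
    bwD m (i + 2^b) j + 1 = bwD m i j := by
  unfold bwD
  have hmem : b ∈ (Finset.range m).filter fun l => bwBit i l ≠ bwBit j l := by
    simp [Finset.mem_filter, Finset.mem_range, hb, h0, hj]
  have hfil : ((Finset.range m).filter fun l => bwBit (i + 2^b) l ≠ bwBit j l)
      = ((Finset.range m).filter fun l => bwBit i l ≠ bwBit j l).erase b := by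
    ext l
    simp only [Finset.mem_filter, Finset.mem_range, Finset.mem_erase, bwBit_flip h0]
    by_cases h : l = b
    · subst h; simp [hj]
    · simp only [if_neg h]; tauto
  rw [hfil, Finset.card_erase_of_mem hmem]
  have := Finset.card_pos.mpr ⟨b, hmem⟩
  omega

lemma bwD_self (m i : ℕ) : bwD m i i = 0 := by
  unfold bwD; simp

lemma bw_parity_core (m i j : ℕ) : (bwPar m i + bwPar m j + bwD m i j) % 2 = 0 := by
  have key : Even (((Finset.range m).filter fun l => bwBit i l = 0).card
      + ((Finset.range m).filter fun l => bwBit j l = 0).card + bwD m i j) := by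
    unfold bwD
    rw [Finset.card_filter, Finset.card_filter, Finset.card_filter,
      ← Finset.sum_add_distrib, ← Finset.sum_add_distrib]
    apply Finset.even_sum
    intro l _
    have h1 := bwBit_le_one i l
    have h2 := bwBit_le_one j l
    rcases Nat.le_one_iff_eq_zero_or_eq_one.mp h1 with h | h <;>
      rcases Nat.le_one_iff_eq_zero_or_eq_one.mp h2 with h' | h' <;>
      simp [h, h']
  unfold bwPar
  rw [Nat.even_iff] at key
  omega
lemma bwExp_eq {m : ℕ} (hme : Even m) (i j : ℕ) :
    bwExp m i j = (bwPar m i : ℤ) + (bwPar m j : ℤ) + (m : ℤ) - (bwD m i j : ℤ) := by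
  obtain ⟨c, hc⟩ := hme
  unfold bwExp
  have hsum : (∑ l ∈ Finset.range m,
      (2 * (bwBit i l : ℤ) * (bwBit j l : ℤ) - (bwBit i l : ℤ) - (bwBit j l : ℤ) + 2))
      = 2 * m - bwD m i j := by
    have hterm : ∀ l ∈ Finset.range m,
        (2 * (bwBit i l : ℤ) * (bwBit j l : ℤ) - (bwBit i l : ℤ) - (bwBit j l : ℤ) + 2)
        = 2 - (if bwBit i l ≠ bwBit j l then (1:ℤ) else 0) := by
      intro l _
      have h1 := bwBit_le_one i l
      have h2 := bwBit_le_one j l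
      rcases Nat.le_one_iff_eq_zero_or_eq_one.mp h1 with h | h <;>
        rcases Nat.le_one_iff_eq_zero_or_eq_one.mp h2 with h' | h' <;>
        simp [h, h']
    rw [Finset.sum_congr rfl hterm, Finset.sum_sub_distrib, Finset.sum_const,
      Finset.card_range]
    have : (∑ l ∈ Finset.range m, if bwBit i l ≠ bwBit j l then (1:ℤ) else 0)
        = (bwD m i j : ℤ) := by
      unfold bwD
      rw [Finset.card_filter]
      push_cast
      rfl
    rw [this]
    push_cast
    ring
  rw [hsum]
  have hm2 : ((m + 1) / 2 : ℕ) = c := by omega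
  rw [hm2]
  have hmz : (m : ℤ) = 2 * c := by
    have : (m : ℤ) = (c : ℤ) + c := by exact_mod_cast hc
    omega
  rw [hmz]
  ring

lemma bwExp_comm {m : ℕ} (hme : Even m) (i j : ℕ) : bwExp m i j = bwExp m j i := by
  rw [bwExp_eq hme, bwExp_eq hme, bwD_comm]
  ring

lemma bwExp_even {m : ℕ} (hme : Even m) (i j : ℕ) : Even (bwExp m i j) := by
  rw [bwExp_eq hme, Int.even_iff]
  have hpc := bw_parity_core m i j
  obtain ⟨c, hc⟩ := hme
  have : (m : ℤ) = (c : ℤ) + (c : ℤ) := by exact_mod_cast hc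
  rw [this]
  rw [Nat.add_mod, Nat.add_mod (bwPar m i)] at hpc
  omega

lemma bwExp_nonneg {m : ℕ} (hme : Even m) (i j : ℕ) : 0 ≤ bwExp m i j := by
  rw [bwExp_eq hme]
  have := bwD_le m i j
  have h1 := bwPar_le_one m i
  have h2 := bwPar_le_one m j
  omega

lemma bwExp_ge_two {m : ℕ} (hme : Even m) {i j b : ℕ} (hb : b < m)
    (hagree : bwBit i b = bwBit j b) : 2 ≤ bwExp m i j := by
  have heven := bwExp_even hme i j
  have hlt := bwD_lt_of_agree (i := i) (j := j) hb hagree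
  have h1 : 1 ≤ bwExp m i j := by
    rw [bwExp_eq hme]; omega
  rw [Int.even_iff] at heven
  omega

lemma bwExp_diag {m : ℕ} (hme : Even m) (i : ℕ) :
    bwExp m i i = 2 * (bwPar m i : ℤ) + m := by
  rw [bwExp_eq hme, bwD_self]
  ring

lemma bwExp_flip_left {m : ℕ} (hme : Even m) {i b : ℕ} (hb : b < m)
    (h0 : bwBit i b = 0) (j : ℕ) :
    bwExp m (i + 2^b) j = bwExp m i j - 2 * (bwPar m i : ℤ) + 2 * (bwBit j b : ℤ) := by
  obtain ⟨hpar, hcard⟩ := bwPar_flip (i := i) hb h0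
  have hple := bwPar_le_one m i
  rcases Nat.le_one_iff_eq_zero_or_eq_one.mp (bwBit_le_one j b) with hj | hj
  · have hD := bwD_flip0 (i := i) (j := j) hb h0 hj
    rw [bwExp_eq hme, bwExp_eq hme, hpar, hD, hj]
    push_cast [Nat.cast_sub (by omega : bwPar m i ≤ 1)]
    ring
  · have hD := bwD_flip1 (i := i) (j := j) hb h0 hj
    rw [bwExp_eq hme, bwExp_eq hme, hpar, ← hD, hj]
    push_cast [Nat.cast_sub (by omega : bwPar m i ≤ 1)]
    ring

lemma bwExp_flip_right {m : ℕ} (hme : Even m) {j b : ℕ} (hb : b < m)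
    (h0 : bwBit j b = 0) (i : ℕ) :
    bwExp m i (j + 2^b) = bwExp m i j - 2 * (bwPar m j : ℤ) + 2 * (bwBit i b : ℤ) := by
  rw [bwExp_comm hme, bwExp_flip_left hme hb h0 i, bwExp_comm hme]
noncomputable def bwSq : ℝ := Real.sqrt 2

lemma bwSq_pos : 0 < bwSq := Real.sqrt_pos.mpr (by norm_num)
lemma bwSq_ne : bwSq ≠ 0 := ne_of_gt bwSq_pos
lemma bwSq_sq : bwSq ^ (2:ℕ) = 2 := Real.sq_sqrt (by norm_num)

lemma bwSq_zpow_add (e f : ℤ) : bwSq ^ (e + f) = bwSq ^ e * bwSq ^ f :=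
  zpow_add₀ bwSq_ne e f

lemma bwSq_zpow_two : bwSq ^ (2:ℤ) = 2 := by
  rw [show (2:ℤ) = ((2:ℕ):ℤ) from rfl, zpow_natCast, bwSq_sq]

lemma bwSq_zpow_two_mul (k : ℤ) : bwSq ^ (2 * k) = (2:ℝ) ^ k := by
  rw [_root_.zpow_mul, bwSq_zpow_two]

lemma bwSq_zpow_two_mul_nat (p : ℕ) : bwSq ^ ((2 * p : ℕ) : ℤ) = (2:ℝ) ^ p := by
  push_cast
  rw [bwSq_zpow_two_mul]
  exact zpow_natCast 2 p

lemma bwSq_int {e : ℤ} (he : Even e) (h0 : 0 ≤ e) : ∃ n : ℤ, bwSq ^ e = (n : ℝ) := by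
  obtain ⟨c, rfl⟩ := he
  refine ⟨2 ^ c.toNat, ?_⟩
  have h3 : c + c = 2 * ((c.toNat : ℤ)) := by omega
  rw [h3, bwSq_zpow_two_mul, zpow_natCast]
  push_cast
  ring

lemma bwSq_even {e : ℤ} (he : Even e) (h2 : 2 ≤ e) : ∃ n : ℤ, bwSq ^ e = 2 * (n : ℝ) := by
  obtain ⟨n, hn⟩ := bwSq_int (e := e - 2) (by rw [Int.even_iff] at he ⊢; omega) (by omega)
  refine ⟨n, ?_⟩
  have : e = 2 + (e - 2) := by ring
  rw [this, bwSq_zpow_add, hn, bwSq_zpow_two]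

lemma bw_add_pow_lt {m i b : ℕ} (hb : b < m) (hi : i < 2^m) (h0 : bwBit i b = 0) :
    i + 2^b < 2^m := by
  obtain ⟨hsplit, hr⟩ := bwBit_split i b
  rw [h0, zero_mul, add_zero] at hsplit
  set q := i / 2^(b+1) with hq
  set r := i % 2^b with hrdef
  have h2 : (2:ℕ)^m = 2^(m-b-1) * 2^(b+1) := by rw [← pow_add]; congr 1; omega
  have h3 : q < 2^(m-b-1) := by
    by_contra h
    push_neg at h
    have : 2^(m-b-1) * 2^(b+1) ≤ q * 2^(b+1) := Nat.mul_le_mul_right _ h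
    omega
  have h4 : (q+1) * 2^(b+1) ≤ 2^(m-b-1) * 2^(b+1) := Nat.mul_le_mul_right _ (by omega)
  have h6 : (q+1) * 2^(b+1) = q * 2^(b+1) + 2^(b+1) := by ring
  have h7 : (2:ℕ)^(b+1) = 2^b + 2^b := by rw [pow_succ]; ring
  omega
section MatrixLayer
variable {m : ℕ}

lemma bwH_lt {x y : Fin (2^m)} (h : (y:ℕ) < (x:ℕ)) :
    bwH m x y = bwSq ^ bwExp m (x:ℕ) (y:ℕ) := by
  unfold bwH
  rw [Matrix.of_apply, if_pos (by exact h)]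
  rfl

lemma bwH_diag (x : Fin (2^m)) : bwH m x x = bwSq ^ (bwExp m (x:ℕ) (x:ℕ) - 2) := by
  unfold bwH
  rw [Matrix.of_apply, if_neg (lt_irrefl _), if_pos rfl]
  rfl

lemma bwH_gt {x y : Fin (2^m)} (h : (x:ℕ) < (y:ℕ)) : bwH m x y = 0 := by
  unfold bwH
  rw [Matrix.of_apply, if_neg (fun hc => absurd (Fin.lt_def.mp hc) (by omega)), if_neg (by
    intro he; rw [he] at h; omega)]

lemma bwH_int (hm : 4 ≤ m) (hme : Even m) (x y : Fin (2^m)) :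
    ∃ n : ℤ, bwH m x y = (n : ℝ) := by
  rcases lt_trichotomy ((y:ℕ)) ((x:ℕ)) with h | h | h
  · rw [bwH_lt h]
    exact bwSq_int (bwExp_even hme _ _) (bwExp_nonneg hme _ _)
  · have : x = y := Fin.ext (by omega)
    subst this
    rw [bwH_diag]
    refine bwSq_int ?_ ?_
    · have := bwExp_even hme (x:ℕ) (x:ℕ)
      rw [Int.even_iff] at *
      omega
    · rw [bwExp_diag hme]
      have := bwPar_le_one m (x:ℕ)
      omega
  · exact ⟨0, by rw [bwH_gt h]; norm_num⟩

lemma bwH_even_diag (hm : 4 ≤ m) (hme : Even m) (x : Fin (2^m)) :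
    ∃ n : ℤ, bwH m x x = 2 * (n : ℝ) := by
  rw [bwH_diag]
  refine bwSq_even ?_ ?_
  · have := bwExp_even hme (x:ℕ) (x:ℕ)
    rw [Int.even_iff] at *
    omega
  · rw [bwExp_diag hme]
    omega

lemma bw_collapse {n : ℕ} (H : Matrix (Fin n) (Fin n) ℝ) (u v u' v' : Fin n)
    (α β γ δ : ℝ) :
    ∑ l, (∑ k, ((α * (if k = u then (1:ℝ) else 0) + β * (if k = v then 1 else 0)) * H k l)) *
        (γ * (if l = u' then (1:ℝ) else 0) + δ * (if l = v' then 1 else 0)) =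
      α * γ * H u u' + β * γ * H v u' + α * δ * H u v' + β * δ * H v v' := by
  have inner : ∀ l, (∑ k, ((α * (if k = u then (1:ℝ) else 0) + β * (if k = v then 1 else 0)) * H k l))
      = α * H u l + β * H v l := by
    intro l
    have hpt : ∀ k, (α * (if k = u then (1:ℝ) else 0) + β * (if k = v then 1 else 0)) * H k l
        = (if k = u then α * H u l else 0) + (if k = v then β * H v l else 0) := by
      intro k
      split_ifs with h1 h2 h3 <;> subst_vars <;> ring
    rw [Finset.sum_congr rfl (fun k _ => hpt k), Finset.sum_add_distrib,
      Finset.sum_ite_eq' Finset.univ u, Finset.sum_ite_eq' Finset.univ v]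
    simp
  rw [Finset.sum_congr rfl (fun l _ => by rw [inner l])]
  rw [Finset.sum_congr rfl (fun l _ => mul_add _ _ _)]
  rw [Finset.sum_add_distrib]
  have h1 : ∀ (w : Fin n) (c : ℝ), (∑ l, (α * H u l + β * H v l) * (c * (if l = w then (1:ℝ) else 0)))
      = (α * H u w + β * H v w) * c := by
    intro w c
    rw [Finset.sum_congr rfl (fun l _ => by
      rw [show (α * H u l + β * H v l) * (c * (if l = w then (1:ℝ) else 0))
        = (if l = w then (α * H u l + β * H v l) * c else 0) from by
        by_cases h : l = w <;> simp [h]])]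
    rw [Finset.sum_ite_eq' Finset.univ w]
    simp
  rw [h1 u' γ, h1 v' δ]
  ring

lemma bw_triple {n : ℕ} (S : Matrix (Fin n) (Fin n) ℤ) (H : Matrix (Fin n) (Fin n) ℝ)
    (i j : Fin n) :
    (S.map (Int.cast : ℤ → ℝ) * H * (S.map (Int.cast : ℤ → ℝ))ᵀ) i j
      = ∑ l, (∑ k, ((S i k : ℤ) : ℝ) * H k l) * ((S j l : ℤ) : ℝ) := by
  simp [Matrix.mul_apply, Matrix.map_apply]

end MatrixLayer
section Rows
variable {m a : ℕ}

lemma bw_row1_id (i : Fin (2^m)) (h1 : bwBit (i:ℕ) (m-a) = 1) (k : Fin (2^m)) :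
    ((bwSigma m a 1 i k : ℤ) : ℝ)
      = 1 * (if k = i then (1:ℝ) else 0) + 0 * (if k = i then 1 else 0) := by
  unfold bwSigma
  rw [Matrix.of_apply, if_pos rfl, if_neg (by rw [h1]; norm_num)]
  split_ifs <;> norm_num

lemma bw_row1_flip (i i' : Fin (2^m)) (h0 : bwBit (i:ℕ) (m-a) = 0)
    (hval : (i':ℕ) = (i:ℕ) + 2^(m-a)) (k : Fin (2^m)) :
    ((bwSigma m a 1 i k : ℤ) : ℝ)
      = (-1) * (if k = i then (1:ℝ) else 0)
        + ((2:ℝ)^(bwPar m (i:ℕ))) * (if k = i' then 1 else 0) := by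
  unfold bwSigma
  rw [Matrix.of_apply, if_pos rfl, if_pos h0]
  have hcond : ((k:ℕ) = (i:ℕ) + 2^(m-a)) ↔ (k = i') := by
    rw [Fin.ext_iff, hval]
  rw [if_congr hcond rfl rfl]
  split_ifs <;> push_cast <;> ring

lemma bw_row2_id (i : Fin (2^m)) (h0 : bwBit (i:ℕ) (m-a) = 0) (k : Fin (2^m)) :
    ((bwSigma m a 2 i k : ℤ) : ℝ)
      = 1 * (if k = i then (1:ℝ) else 0) + 0 * (if k = i then 1 else 0) := by
  unfold bwSigma
  rw [Matrix.of_apply, if_neg (by norm_num), if_neg (by rw [h0]; norm_num)]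
  split_ifs <;> norm_num

lemma bw_row2_flip (i x : Fin (2^m)) (h1 : bwBit (i:ℕ) (m-a) = 1)
    (hval : (x:ℕ) + 2^(m-a) = (i:ℕ)) (k : Fin (2^m)) :
    ((bwSigma m a 2 i k : ℤ) : ℝ)
      = (-1) * (if k = i then (1:ℝ) else 0)
        + ((2:ℝ)^(bwPar m (i:ℕ))) * (if k = x then 1 else 0) := by
  unfold bwSigma
  rw [Matrix.of_apply, if_neg (by norm_num), if_pos h1]
  have hcond : ((k:ℕ) + 2^(m-a) = (i:ℕ)) ↔ (k = x) := by
    constructor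
    · intro h; exact Fin.ext (by omega)
    · intro h; rw [Fin.ext_iff] at h; omega
  rw [if_congr hcond rfl rfl]
  split_ifs <;> push_cast <;> ring

end Rows

lemma bw_entry {m : ℕ} (S : Matrix (Fin (2^m)) (Fin (2^m)) ℤ) (i j u v u' v' : Fin (2^m))
    (α β γ δ : ℝ)
    (hi : ∀ k, ((S i k : ℤ):ℝ) = α * (if k = u then (1:ℝ) else 0) + β * (if k = v then 1 else 0))
    (hj : ∀ l, ((S j l : ℤ):ℝ) = γ * (if l = u' then (1:ℝ) else 0) + δ * (if l = v' then 1 else 0)) :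
    bwBMat m S i j = bwH m i j -
      (α*γ*bwH m u u' + β*γ*bwH m v u' + α*δ*bwH m u v' + β*δ*bwH m v v') := by
  unfold bwBMat
  rw [Matrix.sub_apply]
  congr 1
  rw [bw_triple]
  rw [show (∑ l, (∑ k, ((S i k : ℤ):ℝ) * bwH m k l) * ((S j l : ℤ):ℝ))
      = ∑ l, (∑ k, ((α * (if k = u then (1:ℝ) else 0) + β * (if k = v then 1 else 0)) * bwH m k l)) *
        (γ * (if l = u' then (1:ℝ) else 0) + δ * (if l = v' then 1 else 0)) from
    Finset.sum_congr rfl fun l _ => by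
      rw [hj l]
      congr 1
      exact Finset.sum_congr rfl fun k _ => by rw [hi k]]
  exact bw_collapse _ u v u' v' α β γ δ

lemma bw_pow_mul (p : ℕ) (E : ℤ) : (2:ℝ)^p * bwSq ^ E = bwSq ^ (2*(p:ℤ) + E) := by
  have hcast : ((2*p : ℕ) : ℤ) = 2*(p:ℤ) := by push_cast; ring
  rw [← hcast, bwSq_zpow_add, bwSq_zpow_two_mul_nat]

lemma bw_two_exp (e : ℤ) : bwSq ^ (e + 2) = 2 * bwSq ^ e := by
  rw [bwSq_zpow_add, bwSq_zpow_two]; ring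
lemma bw_key (m : ℕ) (hm : 4 ≤ m) (hme : Even m) (a r : ℕ) (ha : 1 ≤ a) (ha' : a ≤ m)
    (hr : r = 1 ∨ r = 2) (i j : Fin (2^m)) (hij : j < i) :
    ∃ k : ℤ, bwBMat m (bwSigma m a r) i j = 2 * k := by
  have hb : m - a < m := by omega
  have hijv : (j:ℕ) < (i:ℕ) := hij
  have hee := bwExp_even hme (i:ℕ) (j:ℕ)
  have he0 := bwExp_nonneg hme (i:ℕ) (j:ℕ)
  have hpi := bwPar_le_one m (i:ℕ)
  have hpj := bwPar_le_one m (j:ℕ)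
  have hmz : (4:ℤ) ≤ (m:ℤ) := by exact_mod_cast hm
  have hHij : bwH m i j = bwSq ^ bwExp m (i:ℕ) (j:ℕ) := bwH_lt hijv
  rcases hr with rfl | rfl
  · -- r = 1
    rcases Nat.le_one_iff_eq_zero_or_eq_one.mp (bwBit_le_one (i:ℕ) (m-a)) with hbi | hbi <;>
      rcases Nat.le_one_iff_eq_zero_or_eq_one.mp (bwBit_le_one (j:ℕ) (m-a)) with hbj | hbj
    · -- bit i = 0, bit j = 0
      set i' : Fin (2^m) := ⟨(i:ℕ) + 2^(m-a), bw_add_pow_lt hb i.isLt hbi⟩ with hi'def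
      set j' : Fin (2^m) := ⟨(j:ℕ) + 2^(m-a), bw_add_pow_lt hb j.isLt hbj⟩ with hj'def
      rw [bw_entry (bwSigma m a 1) i j i i' j j' (-1) ((2:ℝ)^(bwPar m (i:ℕ)))
        (-1) ((2:ℝ)^(bwPar m (j:ℕ)))
        (bw_row1_flip i i' hbi rfl) (bw_row1_flip j j' hbj rfl)]
      have hflipL := bwExp_flip_left hme hb hbi (j:ℕ)
      have hflipLR := bwExp_flip_right hme hb hbj ((i:ℕ)+2^(m-a))
      have hbit' : bwBit ((i:ℕ)+2^(m-a)) (m-a) = 1 := by rw [bwBit_flip hbi]; simp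
      have hlt1 : (j:ℕ) < (i':ℕ) := by show (j:ℕ) < (i:ℕ)+2^(m-a); exact Nat.lt_add_right _ hijv
      have hlt3 : (j':ℕ) < (i':ℕ) := by
        show (j:ℕ)+2^(m-a) < (i:ℕ)+2^(m-a); exact Nat.add_lt_add_right hijv _
      have hH1 : bwH m i' j = bwSq ^ bwExp m ((i:ℕ)+2^(m-a)) (j:ℕ) := bwH_lt hlt1
      have hH3 : bwH m i' j' = bwSq ^ bwExp m ((i:ℕ)+2^(m-a)) ((j:ℕ)+2^(m-a)) :=
        bwH_lt hlt3
      have hA : (2:ℝ)^(bwPar m (i:ℕ)) * bwSq ^ bwExp m ((i:ℕ)+2^(m-a)) (j:ℕ)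
          = bwSq ^ bwExp m (i:ℕ) (j:ℕ) := by
        rw [bw_pow_mul]
        congr 1
        rw [hflipL, hbj]
        push_cast; ring
      have hC : (2:ℝ)^(bwPar m (i:ℕ)) * ((2:ℝ)^(bwPar m (j:ℕ))
            * bwSq ^ bwExp m ((i:ℕ)+2^(m-a)) ((j:ℕ)+2^(m-a)))
          = 2 * bwSq ^ bwExp m (i:ℕ) (j:ℕ) := by
        rw [bw_pow_mul, bw_pow_mul, ← bw_two_exp]
        congr 1
        rw [hflipLR, hbit', hflipL, hbj]
        push_cast; ring
      rcases lt_trichotomy ((j:ℕ)+2^(m-a)) (i:ℕ) with h | h | h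
      · -- i > j'
        have hflipR := bwExp_flip_right hme hb hbj (i:ℕ)
        have hltx : (j':ℕ) < (i:ℕ) := by show (j:ℕ)+2^(m-a) < (i:ℕ); exact h
        have hH2 : bwH m i j' = bwSq ^ bwExp m (i:ℕ) ((j:ℕ)+2^(m-a)) := bwH_lt hltx
        have hB : (2:ℝ)^(bwPar m (j:ℕ)) * bwSq ^ bwExp m (i:ℕ) ((j:ℕ)+2^(m-a))
            = bwSq ^ bwExp m (i:ℕ) (j:ℕ) := by
          rw [bw_pow_mul]
          congr 1
          rw [hflipR, hbi]
          push_cast; ring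
        refine ⟨0, ?_⟩
        rw [hHij, hH1, hH2, hH3]
        push_cast
        linear_combination hA + hB - hC
      · -- i = j' : impossible since bits differ
        exfalso
        have h2 : bwBit ((j:ℕ)+2^(m-a)) (m-a) = 1 := by rw [bwBit_flip hbj]; simp
        rw [h] at h2
        omega
      · -- i < j'
        have hgtx : (i:ℕ) < (j':ℕ) := by show (i:ℕ) < (j:ℕ)+2^(m-a); exact h
        have hH2 : bwH m i j' = 0 := bwH_gt hgtx
        have he2 : 2 ≤ bwExp m (i:ℕ) (j:ℕ) := bwExp_ge_two hme hb (hbi.trans hbj.symm)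
        obtain ⟨n, hn⟩ := bwSq_even hee he2
        refine ⟨-n, ?_⟩
        rw [hHij, hH1, hH2, hH3]
        push_cast
        linear_combination hA - hC - hn
    · -- bit i = 0, bit j = 1
      set i' : Fin (2^m) := ⟨(i:ℕ) + 2^(m-a), bw_add_pow_lt hb i.isLt hbi⟩ with hi'def
      rw [bw_entry (bwSigma m a 1) i j i i' j j (-1) ((2:ℝ)^(bwPar m (i:ℕ))) 1 0
        (bw_row1_flip i i' hbi rfl) (bw_row1_id j hbj)]
      have hflipL := bwExp_flip_left hme hb hbi (j:ℕ)
      have hlt1 : (j:ℕ) < (i':ℕ) := by show (j:ℕ) < (i:ℕ)+2^(m-a); exact Nat.lt_add_right _ hijv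
      have hH1 : bwH m i' j = bwSq ^ bwExp m ((i:ℕ)+2^(m-a)) (j:ℕ) := bwH_lt hlt1
      have hA : (2:ℝ)^(bwPar m (i:ℕ)) * bwSq ^ bwExp m ((i:ℕ)+2^(m-a)) (j:ℕ)
          = 2 * bwSq ^ bwExp m (i:ℕ) (j:ℕ) := by
        rw [bw_pow_mul, ← bw_two_exp]
        congr 1
        rw [hflipL, hbj]
        push_cast; ring
      refine ⟨0, ?_⟩
      rw [hHij, hH1]
      push_cast
      linear_combination -hA
    · -- bit i = 1, bit j = 0
      set j' : Fin (2^m) := ⟨(j:ℕ) + 2^(m-a), bw_add_pow_lt hb j.isLt hbj⟩ with hj'def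
      rw [bw_entry (bwSigma m a 1) i j i i j j' 1 0 (-1) ((2:ℝ)^(bwPar m (j:ℕ)))
        (bw_row1_id i hbi) (bw_row1_flip j j' hbj rfl)]
      have hflipR := bwExp_flip_right hme hb hbj (i:ℕ)
      rcases lt_trichotomy ((j:ℕ)+2^(m-a)) (i:ℕ) with h | h | h
      · have hH2 : bwH m i j' = bwSq ^ bwExp m (i:ℕ) ((j:ℕ)+2^(m-a)) := bwH_lt h
        have hB : (2:ℝ)^(bwPar m (j:ℕ)) * bwSq ^ bwExp m (i:ℕ) ((j:ℕ)+2^(m-a))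
            = 2 * bwSq ^ bwExp m (i:ℕ) (j:ℕ) := by
          rw [bw_pow_mul, ← bw_two_exp]
          congr 1
          rw [hflipR, hbi]
          push_cast; ring
        refine ⟨0, ?_⟩
        rw [hHij, hH2]
        push_cast
        linear_combination -hB
      · -- i = j' : diagonal
        have heq : i = j' := Fin.ext (by show (i:ℕ) = (j:ℕ)+2^(m-a); exact h.symm)
        have hH2 : bwH m i j' = bwSq ^ (bwExp m (i:ℕ) (i:ℕ) - 2) := by
          rw [heq]; exact bwH_diag j'
        have hEd : bwExp m (i:ℕ) ((j:ℕ)+2^(m-a)) = bwExp m (i:ℕ) (i:ℕ) := by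
          rw [← h]
        have hB : (2:ℝ)^(bwPar m (j:ℕ)) * bwSq ^ (bwExp m (i:ℕ) (i:ℕ) - 2)
            = bwSq ^ bwExp m (i:ℕ) (j:ℕ) := by
          rw [bw_pow_mul]
          congr 1
          rw [← hEd, hflipR, hbi]
          push_cast; ring
        have hD1 : bwD m (i:ℕ) (j:ℕ) = 1 := by
          have hD' := bwD_flip0 (m := m) (i := (j:ℕ)) (j := (j:ℕ)) hb hbj hbj
          rw [bwD_self, h] at hD'
          omega
        have he2 : 2 ≤ bwExp m (i:ℕ) (j:ℕ) := by
          rw [bwExp_eq hme, hD1]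
          push_cast
          omega
        obtain ⟨n, hn⟩ := bwSq_even hee he2
        refine ⟨n, ?_⟩
        rw [hHij, hH2]
        push_cast
        linear_combination hn - hB
      · have hH2 : bwH m i j' = 0 := bwH_gt h
        obtain ⟨n, hn⟩ := bwSq_int hee he0
        refine ⟨n, ?_⟩
        rw [hHij, hH2]
        push_cast
        linear_combination 2 * hn
    · -- bit i = 1, bit j = 1
      rw [bw_entry (bwSigma m a 1) i j i i j j 1 0 1 0
        (bw_row1_id i hbi) (bw_row1_id j hbj)]
      exact ⟨0, by push_cast; ring⟩
  · -- r = 2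
    rcases Nat.le_one_iff_eq_zero_or_eq_one.mp (bwBit_le_one (i:ℕ) (m-a)) with hbi | hbi <;>
      rcases Nat.le_one_iff_eq_zero_or_eq_one.mp (bwBit_le_one (j:ℕ) (m-a)) with hbj | hbj
    · -- bit i = 0, bit j = 0 : both identity rows
      rw [bw_entry (bwSigma m a 2) i j i i j j 1 0 1 0
        (bw_row2_id i hbi) (bw_row2_id j hbj)]
      exact ⟨0, by push_cast; ring⟩
    · -- bit i = 0, bit j = 1
      obtain ⟨hle_j, hy0, hyeq'⟩ := bwBit_one_sub hbj
      set y : Fin (2^m) := ⟨(j:ℕ) - 2^(m-a), lt_of_le_of_lt (Nat.sub_le _ _) j.isLt⟩ with hydef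
      have hyval : (y:ℕ) + 2^(m-a) = (j:ℕ) := by
        show ((j:ℕ)-2^(m-a)) + 2^(m-a) = (j:ℕ); omega
      rw [bw_entry (bwSigma m a 2) i j i i j y 1 0 (-1) ((2:ℝ)^(bwPar m (j:ℕ)))
        (bw_row2_id i hbi) (bw_row2_flip j y hbj hyval)]
      have hyeq : (j:ℕ) - 2^(m-a) + 2^(m-a) = (j:ℕ) := by omega
      have hpary := (bwPar_flip hb hy0).1
      rw [hyeq] at hpary
      have hpyle := bwPar_le_one m ((j:ℕ)-2^(m-a))
      have hfy := bwExp_flip_right hme hb hy0 (i:ℕ)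
      rw [hyeq] at hfy
      rw [hbi] at hfy
      have hlt2 : (y:ℕ) < (i:ℕ) := lt_of_le_of_lt (Nat.sub_le _ _) hijv
      have hH2 : bwH m i y = bwSq ^ bwExp m (i:ℕ) ((j:ℕ)-2^(m-a)) := bwH_lt hlt2
      have hB : (2:ℝ)^(bwPar m (j:ℕ)) * bwSq ^ bwExp m (i:ℕ) ((j:ℕ)-2^(m-a))
          = 2 * bwSq ^ bwExp m (i:ℕ) (j:ℕ) := by
        rw [bw_pow_mul, ← bw_two_exp]
        congr 1
        omega
      refine ⟨0, ?_⟩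
      rw [hHij, hH2]
      push_cast
      linear_combination -hB
    · -- bit i = 1, bit j = 0
      obtain ⟨hle_i, hx0, hxeq'⟩ := bwBit_one_sub hbi
      set x : Fin (2^m) := ⟨(i:ℕ) - 2^(m-a), lt_of_le_of_lt (Nat.sub_le _ _) i.isLt⟩ with hxdef
      have hxval : (x:ℕ) + 2^(m-a) = (i:ℕ) := by
        show ((i:ℕ)-2^(m-a)) + 2^(m-a) = (i:ℕ); omega
      rw [bw_entry (bwSigma m a 2) i j i x j j (-1) ((2:ℝ)^(bwPar m (i:ℕ))) 1 0
        (bw_row2_flip i x hbi hxval) (bw_row2_id j hbj)]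
      have hxeq : (i:ℕ) - 2^(m-a) + 2^(m-a) = (i:ℕ) := by omega
      have hparx := (bwPar_flip hb hx0).1
      rw [hxeq] at hparx
      have hpxle := bwPar_le_one m ((i:ℕ)-2^(m-a))
      have hfi := bwExp_flip_left hme hb hx0 (j:ℕ)
      rw [hxeq] at hfi
      rw [hbj] at hfi
      rcases lt_trichotomy ((i:ℕ)-2^(m-a)) (j:ℕ) with h | h | h
      · -- x < j : H x j = 0
        have hH2 : bwH m x j = 0 := bwH_gt (show (x:ℕ) < (j:ℕ) from h)
        obtain ⟨n, hn⟩ := bwSq_int hee he0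
        refine ⟨n, ?_⟩
        rw [hHij, hH2]
        push_cast
        linear_combination 2 * hn
      · -- x = j : diagonal
        have heq : x = j := Fin.ext (show (i:ℕ)-2^(m-a) = (j:ℕ) from h)
        have hH2 : bwH m x j = bwSq ^ (bwExp m (j:ℕ) (j:ℕ) - 2) := by
          rw [heq]; exact bwH_diag j
        rw [h] at hfi hparx
        have hB : (2:ℝ)^(bwPar m (i:ℕ)) * bwSq ^ (bwExp m (j:ℕ) (j:ℕ) - 2)
            = bwSq ^ bwExp m (i:ℕ) (j:ℕ) := by
          rw [bw_pow_mul]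
          congr 1
          omega
        have hiv : (i:ℕ) = (j:ℕ) + 2^(m-a) := by omega
        have hD' := bwD_flip0 (m := m) (i := (j:ℕ)) (j := (j:ℕ)) hb hbj hbj
        rw [bwD_self, ← hiv] at hD'
        have he2 : 2 ≤ bwExp m (i:ℕ) (j:ℕ) := by
          rw [bwExp_eq hme, hD']
          push_cast
          omega
        obtain ⟨n, hn⟩ := bwSq_even hee he2
        refine ⟨n, ?_⟩
        rw [hHij, hH2]
        push_cast
        linear_combination hn - hB
      · -- x > j
        have hH2 : bwH m x j = bwSq ^ bwExp m ((i:ℕ)-2^(m-a)) (j:ℕ) :=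
          bwH_lt (show (j:ℕ) < (x:ℕ) from h)
        have hB : (2:ℝ)^(bwPar m (i:ℕ)) * bwSq ^ bwExp m ((i:ℕ)-2^(m-a)) (j:ℕ)
            = 2 * bwSq ^ bwExp m (i:ℕ) (j:ℕ) := by
          rw [bw_pow_mul, ← bw_two_exp]
          congr 1
          omega
        refine ⟨0, ?_⟩
        rw [hHij, hH2]
        push_cast
        linear_combination -hB
    · -- bit i = 1, bit j = 1
      obtain ⟨hle_i, hx0, hxeq'⟩ := bwBit_one_sub hbi
      obtain ⟨hle_j, hy0, hyeq'⟩ := bwBit_one_sub hbj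
      set x : Fin (2^m) := ⟨(i:ℕ) - 2^(m-a), lt_of_le_of_lt (Nat.sub_le _ _) i.isLt⟩ with hxdef
      set y : Fin (2^m) := ⟨(j:ℕ) - 2^(m-a), lt_of_le_of_lt (Nat.sub_le _ _) j.isLt⟩ with hydef
      have hxval : (x:ℕ) + 2^(m-a) = (i:ℕ) := by
        show ((i:ℕ)-2^(m-a)) + 2^(m-a) = (i:ℕ); omega
      have hyval : (y:ℕ) + 2^(m-a) = (j:ℕ) := by
        show ((j:ℕ)-2^(m-a)) + 2^(m-a) = (j:ℕ); omega
      rw [bw_entry (bwSigma m a 2) i j i x j y (-1) ((2:ℝ)^(bwPar m (i:ℕ)))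
        (-1) ((2:ℝ)^(bwPar m (j:ℕ)))
        (bw_row2_flip i x hbi hxval) (bw_row2_flip j y hbj hyval)]
      have hxeq : (i:ℕ) - 2^(m-a) + 2^(m-a) = (i:ℕ) := by omega
      have hyeq : (j:ℕ) - 2^(m-a) + 2^(m-a) = (j:ℕ) := by omega
      have hparx := (bwPar_flip hb hx0).1
      rw [hxeq] at hparx
      have hpary := (bwPar_flip hb hy0).1
      rw [hyeq] at hpary
      have hpxle := bwPar_le_one m ((i:ℕ)-2^(m-a))
      have hpyle := bwPar_le_one m ((j:ℕ)-2^(m-a))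
      -- exponent relations
      have hfi := bwExp_flip_left hme hb hx0 (j:ℕ)
      rw [hxeq, hbj] at hfi
      have hfy := bwExp_flip_right hme hb hy0 (i:ℕ)
      rw [hyeq, hbi] at hfy
      have hfxy := bwExp_flip_right hme hb hy0 ((i:ℕ)-2^(m-a))
      rw [hyeq, hx0] at hfxy
      -- H values
      have hlt2 : (y:ℕ) < (i:ℕ) := lt_of_le_of_lt (Nat.sub_le _ _) hijv
      have hH_iy : bwH m i y = bwSq ^ bwExp m (i:ℕ) ((j:ℕ)-2^(m-a)) := bwH_lt hlt2
      have hlt3 : (y:ℕ) < (x:ℕ) := Nat.sub_lt_sub_right hle_j hijv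
      have hH_xy : bwH m x y = bwSq ^ bwExp m ((i:ℕ)-2^(m-a)) ((j:ℕ)-2^(m-a)) :=
        bwH_lt hlt3
      have hB : (2:ℝ)^(bwPar m (j:ℕ)) * bwSq ^ bwExp m (i:ℕ) ((j:ℕ)-2^(m-a))
          = bwSq ^ bwExp m (i:ℕ) (j:ℕ) := by
        rw [bw_pow_mul]
        congr 1
        omega
      have hC : (2:ℝ)^(bwPar m (i:ℕ)) * ((2:ℝ)^(bwPar m (j:ℕ))
            * bwSq ^ bwExp m ((i:ℕ)-2^(m-a)) ((j:ℕ)-2^(m-a)))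
          = 2 * bwSq ^ bwExp m (i:ℕ) (j:ℕ) := by
        rw [bw_pow_mul, bw_pow_mul, ← bw_two_exp]
        congr 1
        omega
      rcases lt_trichotomy ((i:ℕ)-2^(m-a)) (j:ℕ) with h | h | h
      · -- x < j : H x j = 0
        have hH_xj : bwH m x j = 0 := bwH_gt (show (x:ℕ) < (j:ℕ) from h)
        have he2 : 2 ≤ bwExp m (i:ℕ) (j:ℕ) := bwExp_ge_two hme hb (hbi.trans hbj.symm)
        obtain ⟨n, hn⟩ := bwSq_even hee he2
        refine ⟨-n, ?_⟩
        rw [hHij, hH_iy, hH_xy, hH_xj]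
        push_cast
        linear_combination hB - hC - hn
      · -- x = j : impossible, bits differ
        exfalso
        rw [h] at hx0
        omega
      · -- x > j
        have hH_xj : bwH m x j = bwSq ^ bwExp m ((i:ℕ)-2^(m-a)) (j:ℕ) :=
          bwH_lt (show (j:ℕ) < (x:ℕ) from h)
        have hA : (2:ℝ)^(bwPar m (i:ℕ)) * bwSq ^ bwExp m ((i:ℕ)-2^(m-a)) (j:ℕ)
            = bwSq ^ bwExp m (i:ℕ) (j:ℕ) := by
          rw [bw_pow_mul]
          congr 1
          omega
        refine ⟨0, ?_⟩
        rw [hHij, hH_iy, hH_xy, hH_xj]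
        push_cast
        linear_combination hA + hB - hC

/-- For `m ≥ 4` even, `u_{Σ_{ar}}(α) = 1` for all `α`; equivalently all entries of
`H - Σ_{ar} H Σ_{ar}ᵀ` below the diagonal are even. -/
theorem bwU_trivial_even_case (m : ℕ) (hm : 4 ≤ m) (hme : Even m) (a r : ℕ)
    (ha : 1 ≤ a) (ha' : a ≤ m) (hr : r = 1 ∨ r = 2) :
    (∀ α : Fin (2 ^ m) → ℤ, bwU m (bwSigma m a r) α = 1) ∧
    (∀ i j : Fin (2 ^ m), j < i → ∃ k : ℤ, bwBMat m (bwSigma m a r) i j = 2 * k) := by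
  have key : ∀ i j : Fin (2^m), j < i → ∃ k : ℤ, bwBMat m (bwSigma m a r) i j = 2 * k :=
    fun i j h => bw_key m hm hme a r ha ha' hr i j h
  refine ⟨?_, key⟩
  intro α
  classical
  have hk : ∀ i j : Fin (2^m), ∃ k : ℤ, (j < i → bwBMat m (bwSigma m a r) i j = 2 * k) := by
    intro i j
    by_cases h : j < i
    · obtain ⟨k, hkk⟩ := key i j h
      exact ⟨k, fun _ => hkk⟩
    · exact ⟨0, fun hc => absurd hc h⟩
  choose k hkk using hk
  have hquad : bwBQuad m (bwSigma m a r) α α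
      = 2 * ((∑ i, ∑ j, if j < i then α i * α j * k i j else 0 : ℤ) : ℝ) := by
    unfold bwBQuad
    push_cast
    rw [Finset.mul_sum]
    refine Finset.sum_congr rfl fun i _ => ?_
    rw [Finset.mul_sum]
    refine Finset.sum_congr rfl fun j _ => ?_
    by_cases h : j < i
    · rw [if_pos h, if_pos h, hkk i j h]
      push_cast
      ring
    · rw [if_neg h, if_neg h]
      simp
  unfold bwU
  rw [hquad, show Real.pi * (2 * ((∑ i, ∑ j, if j < i then α i * α j * k i j else 0 : ℤ) : ℝ))
      = ((∑ i, ∑ j, if j < i then α i * α j * k i j else 0 : ℤ) : ℝ) * (2 * Real.pi) by ring]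
  exact Real.cos_int_mul_two_pi _
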